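/- (i) For every η⁺ ∈ (0, π) there exists γ > 0 such that √(Λᵃ(η₂)) − √(Λᵃ(η₁)) ≥ γ·(η₂ − η₁) whenever 0 ≤ η₁ ≤ η₂ ≤ η⁺. (ii) For all a, b with 0 < a ≤ b < π there exists γ > 0 such that √(Λᵒ(η₁)) − √(Λᵒ(η₂)) ≥ γ·(η₂ − η₁) whenever a ≤ η₁ ≤ η₂ ≤ b. In particular, the square roots of the eigenvalues on the corresponding filtered parts of the acoustic and optic branches have a uniform spectral gap. -/

import Mathlib

open Real

noncomputable def Delta (η : ℝ) : ℝ :=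
  1 + 268 * Real.cos (η / 2) ^ 2 - 44 * Real.cos (η / 2) ^ 4

lemma delta_ge_one (η : ℝ) : 1 ≤ Delta η := by
  have h := Real.cos_sq_le_one (η/2)
  have h2 := sq_nonneg (Real.cos (η/2))
  unfold Delta; nlinarith

lemma delta_le (η : ℝ) : Delta η ≤ 225 := by
  have h := Real.cos_sq_le_one (η/2)
  have h2 := sq_nonneg (Real.cos (η/2))
  unfold Delta; nlinarith

lemma sqrtD_ge (η : ℝ) : 1 ≤ Real.sqrt (Delta η) := by
  rw [show (1:ℝ) = Real.sqrt 1 by simp]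
  exact Real.sqrt_le_sqrt (delta_ge_one η)

lemma sqrtD_le (η : ℝ) : Real.sqrt (Delta η) ≤ 15 := by
  rw [show (15:ℝ) = Real.sqrt 225 by rw [show (225:ℝ) = 15^2 by norm_num, Real.sqrt_sq (by norm_num)]]
  exact Real.sqrt_le_sqrt (delta_le η)

noncomputable def D' (η : ℝ) : ℝ :=
  Real.sin (η/2) * Real.cos (η/2) * (88 * Real.cos (η/2)^2 - 268)

lemma hasDerivAt_Delta (η : ℝ) : HasDerivAt Delta (D' η) η := by
  have hc : HasDerivAt (fun x : ℝ => Real.cos (x/2)) (-Real.sin (η/2) * (1/2)) η := by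
    simpa [Function.comp_def] using (Real.hasDerivAt_cos (η/2)).comp η ((hasDerivAt_id η).div_const 2)
  have h2 := hc.pow 2
  have h4 := hc.pow 4
  have := ((h2.const_mul (268:ℝ)).const_add 1).sub (h4.const_mul (44:ℝ))
  refine this.congr_deriv ?_
  unfold D'; push_cast; ring

lemma hasDerivAt_sqrtDelta (η : ℝ) :
    HasDerivAt (fun x => Real.sqrt (Delta x)) (D' η / (2 * Real.sqrt (Delta η))) η := by
  have hne : Delta η ≠ 0 := by have := delta_ge_one η; linarith
  have := (Real.hasDerivAt_sqrt hne).comp η (hasDerivAt_Delta η)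
  refine this.congr_deriv ?_
  ring

noncomputable def Lama (η : ℝ) : ℝ :=
  120 * Real.sin (η / 2) ^ 2 / (11 + 4 * Real.cos (η / 2) ^ 2 + Real.sqrt (Delta η))

noncomputable def Qf (η : ℝ) : ℝ := 11 + 4 * Real.cos (η / 2) ^ 2 + Real.sqrt (Delta η)

lemma Qf_ge (η : ℝ) : 12 ≤ Qf η := by
  have h := sqrtD_ge η; have h2 := sq_nonneg (Real.cos (η/2)); unfold Qf; nlinarith

lemma Qf_le (η : ℝ) : Qf η ≤ 30 := by
  have h := sqrtD_le η; have h2 := Real.cos_sq_le_one (η/2); unfold Qf; nlinarith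

lemma Qf_pos (η : ℝ) : 0 < Qf η := lt_of_lt_of_le (by norm_num) (Qf_ge η)

noncomputable def Q' (η : ℝ) : ℝ :=
  -(4 * Real.sin (η/2) * Real.cos (η/2)) + D' η / (2 * Real.sqrt (Delta η))

lemma hasDerivAt_Qf (η : ℝ) : HasDerivAt Qf (Q' η) η := by
  have hc : HasDerivAt (fun x : ℝ => Real.cos (x/2)) (-Real.sin (η/2) * (1/2)) η := by
    simpa [Function.comp_def] using (Real.hasDerivAt_cos (η/2)).comp η ((hasDerivAt_id η).div_const 2)
  have h2 := (hc.pow 2).const_mul (4:ℝ)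
  have := (h2.const_add (11:ℝ)).add (hasDerivAt_sqrtDelta η)
  refine this.congr_deriv ?_
  unfold Q'; push_cast; ring

noncomputable def La' (η : ℝ) : ℝ :=
  (120 * (Real.sin (η/2) * Real.cos (η/2)) * Qf η - 120 * Real.sin (η/2)^2 * Q' η) / (Qf η)^2

lemma hasDerivAt_Lama (η : ℝ) : HasDerivAt Lama (La' η) η := by
  have hs : HasDerivAt (fun x : ℝ => Real.sin (x/2)) (Real.cos (η/2) * (1/2)) η := by
    simpa [Function.comp_def] using (Real.hasDerivAt_sin (η/2)).comp η ((hasDerivAt_id η).div_const 2)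
  have hN : HasDerivAt (fun x : ℝ => 120 * Real.sin (x/2)^2)
      (120 * (Real.sin (η/2) * Real.cos (η/2))) η := by
    have := (hs.pow 2).const_mul (120:ℝ)
    refine this.congr_deriv ?_; push_cast; ring
  have := hN.div (hasDerivAt_Qf η) (ne_of_gt (Qf_pos η))
  exact this

lemma La'_ge (η : ℝ) (h1 : 0 ≤ η) (h2 : η ≤ π) :
    4 * (Real.sin (η/2) * Real.cos (η/2)) ≤ La' η := by
  have hpi := Real.pi_pos
  have hS : 0 ≤ Real.sin (η/2) := Real.sin_nonneg_of_nonneg_of_le_pi (by linarith) (by linarith)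
  have hC : 0 ≤ Real.cos (η/2) := Real.cos_nonneg_of_mem_Icc ⟨by linarith, by linarith⟩
  have hCsq : Real.cos (η/2)^2 ≤ 1 := Real.cos_sq_le_one (η/2)
  have hR1 : 1 ≤ Real.sqrt (Delta η) := sqrtD_ge η
  have hQ12 := Qf_ge η
  have hQ30 := Qf_le η
  have hQpos := Qf_pos η
  set S := Real.sin (η/2)
  set C := Real.cos (η/2)
  set R := Real.sqrt (Delta η)
  have hX : Q' η ≤ -(4 * S * C) := by
    unfold Q' D'
    have hd : S * C * (88 * C^2 - 268) / (2 * R) ≤ 0 := by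
      apply div_nonpos_of_nonpos_of_nonneg
      · nlinarith [mul_nonneg hS hC]
      · linarith
    linarith
  rw [La', le_div_iff₀ (by positivity)]
  nlinarith [mul_nonneg (mul_nonneg hS hC) hQpos.le, sq_nonneg S,
    mul_nonneg (mul_nonneg (mul_nonneg hS hS) hS) hC,
    mul_le_mul_of_nonneg_left hX (by positivity : (0:ℝ) ≤ 120 * S^2),
    mul_nonneg (mul_nonneg (mul_nonneg hS hC) hQpos.le) (by linarith : (0:ℝ) ≤ 30 - Qf η)]

noncomputable def Lamo (η : ℝ) : ℝ :=
  (22 + 8 * Real.cos (η / 2) ^ 2 + 2 * Real.sqrt (Delta η)) / (1 + Real.sin (η / 2) ^ 2)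

noncomputable def Pf (η : ℝ) : ℝ := 1 + Real.sin (η / 2) ^ 2
noncomputable def Nf (η : ℝ) : ℝ := 22 + 8 * Real.cos (η / 2) ^ 2 + 2 * Real.sqrt (Delta η)

lemma Pf_ge (η : ℝ) : 1 ≤ Pf η := by have := sq_nonneg (Real.sin (η/2)); unfold Pf; linarith
lemma Pf_le (η : ℝ) : Pf η ≤ 2 := by have := Real.sin_sq_le_one (η/2); unfold Pf; linarith
lemma Pf_pos (η : ℝ) : 0 < Pf η := lt_of_lt_of_le one_pos (Pf_ge η)
lemma Nf_ge (η : ℝ) : 24 ≤ Nf η := by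
  have := sqrtD_ge η; have := sq_nonneg (Real.cos (η/2)); unfold Nf; nlinarith
lemma Nf_le (η : ℝ) : Nf η ≤ 60 := by
  have := sqrtD_le η; have := Real.cos_sq_le_one (η/2); unfold Nf; nlinarith

lemma Lamo_ge (η : ℝ) : 12 ≤ Lamo η := by
  have h : Lamo η = Nf η / Pf η := rfl
  rw [h, le_div_iff₀ (Pf_pos η)]
  have := Nf_ge η; have := Pf_le η; nlinarith
lemma Lamo_le (η : ℝ) : Lamo η ≤ 64 := by
  have h : Lamo η = Nf η / Pf η := rfl
  rw [h, div_le_iff₀ (Pf_pos η)]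
  have := Nf_le η; have := Pf_ge η; nlinarith

noncomputable def N' (η : ℝ) : ℝ :=
  -(8 * Real.sin (η/2) * Real.cos (η/2)) + 2 * (D' η / (2 * Real.sqrt (Delta η)))
noncomputable def P' (η : ℝ) : ℝ := Real.sin (η/2) * Real.cos (η/2)
noncomputable def Lo' (η : ℝ) : ℝ := (N' η * Pf η - Nf η * P' η) / (Pf η)^2

lemma hasDerivAt_Lamo (η : ℝ) : HasDerivAt Lamo (Lo' η) η := by
  have hc : HasDerivAt (fun x : ℝ => Real.cos (x/2)) (-Real.sin (η/2) * (1/2)) η := by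
    simpa [Function.comp_def] using (Real.hasDerivAt_cos (η/2)).comp η ((hasDerivAt_id η).div_const 2)
  have hs : HasDerivAt (fun x : ℝ => Real.sin (x/2)) (Real.cos (η/2) * (1/2)) η := by
    simpa [Function.comp_def] using (Real.hasDerivAt_sin (η/2)).comp η ((hasDerivAt_id η).div_const 2)
  have hN : HasDerivAt Nf (N' η) η := by
    have := (((hc.pow 2).const_mul (8:ℝ)).const_add (22:ℝ)).add
      ((hasDerivAt_sqrtDelta η).const_mul (2:ℝ))
    refine this.congr_deriv ?_
    unfold N'; push_cast; ring
  have hP : HasDerivAt Pf (P' η) η := by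
    have := (hs.pow 2).const_add (1:ℝ)
    refine this.congr_deriv ?_
    unfold P'; push_cast; ring
  exact hN.div hP (ne_of_gt (Pf_pos η))

lemma Lo'_le (η : ℝ) (h1 : 0 ≤ η) (h2 : η ≤ π) :
    Lo' η ≤ -(8 * (Real.sin (η/2) * Real.cos (η/2))) := by
  have hpi := Real.pi_pos
  have hS : 0 ≤ Real.sin (η/2) := Real.sin_nonneg_of_nonneg_of_le_pi (by linarith) (by linarith)
  have hC : 0 ≤ Real.cos (η/2) := Real.cos_nonneg_of_mem_Icc ⟨by linarith, by linarith⟩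
  have hCsq : Real.cos (η/2)^2 ≤ 1 := Real.cos_sq_le_one (η/2)
  have hSsq : Real.sin (η/2)^2 ≤ 1 := Real.sin_sq_le_one (η/2)
  have hR1 : 1 ≤ Real.sqrt (Delta η) := sqrtD_ge η
  have hP1 := Pf_ge η
  have hP2 := Pf_le η
  have hPpos := Pf_pos η
  have hN24 := Nf_ge η
  set S := Real.sin (η/2)
  set C := Real.cos (η/2)
  set R := Real.sqrt (Delta η)
  have hX : N' η ≤ -(8 * S * C) := by
    unfold N' D'
    have hd : S * C * (88 * C^2 - 268) / (2 * R) ≤ 0 := by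
      apply div_nonpos_of_nonpos_of_nonneg
      · nlinarith [mul_nonneg hS hC]
      · linarith
    linarith
  rw [Lo', div_le_iff₀ (by positivity)]
  have hSC : 0 ≤ S * C := mul_nonneg hS hC
  have hPP : P' η = S * C := rfl
  rw [hPP]
  nlinarith [mul_le_mul_of_nonneg_right hX hPpos.le,
    mul_le_mul_of_nonneg_left hN24 hSC,
    mul_nonneg hSC (by nlinarith : (0:ℝ) ≤ 3 + Pf η - Pf η^2)]

lemma continuous_sqrtDelta : Continuous fun η => Real.sqrt (Delta η) :=
  Real.continuous_sqrt.comp (by unfold Delta; continuity)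

lemma continuous_Lama : Continuous Lama := by
  have h1 : Continuous fun η : ℝ => 120 * Real.sin (η/2)^2 := by continuity
  have h2 : Continuous Qf := by
    have : Continuous fun η : ℝ => 11 + 4 * Real.cos (η/2)^2 := by continuity
    exact this.add continuous_sqrtDelta
  exact h1.div h2 fun η => ne_of_gt (Qf_pos η)

lemma continuous_Lamo : Continuous Lamo := by
  have h1 : Continuous Nf := by
    have : Continuous fun η : ℝ => 22 + 8 * Real.cos (η/2)^2 := by continuity
    exact this.add (continuous_sqrtDelta.const_smul (2:ℝ))
  have h2 : Continuous Pf := by unfold Pf; continuity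
  exact h1.div h2 fun η => ne_of_gt (Pf_pos η)

lemma Lama_pos (η : ℝ) (h1 : 0 < η) (h2 : η < π) : 0 < Lama η := by
  have hS : 0 < Real.sin (η/2) := Real.sin_pos_of_pos_of_lt_pi (by linarith) (by linarith)
  exact div_pos (by positivity) (Qf_pos η)

lemma sqrt_Lama_le (η : ℝ) (h1 : 0 ≤ η) (h2 : η ≤ π) :
    Real.sqrt (Lama η) ≤ 4 * Real.sin (η/2) := by
  have hpi := Real.pi_pos
  have hS : 0 ≤ Real.sin (η/2) := Real.sin_nonneg_of_nonneg_of_le_pi (by linarith) (by linarith)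
  have hL : Lama η ≤ (4 * Real.sin (η/2))^2 := by
    have h : Lama η = 120 * Real.sin (η/2)^2 / Qf η := rfl
    rw [h, div_le_iff₀ (Qf_pos η)]
    have := Qf_ge η
    nlinarith [sq_nonneg (Real.sin (η/2))]
  calc Real.sqrt (Lama η) ≤ Real.sqrt ((4 * Real.sin (η/2))^2) := Real.sqrt_le_sqrt hL
  _ = 4 * Real.sin (η/2) := Real.sqrt_sq (by positivity)

lemma hasDerivAt_sqrtLama (η : ℝ) (h : Lama η ≠ 0) :
    HasDerivAt (fun x => Real.sqrt (Lama x)) (La' η / (2 * Real.sqrt (Lama η))) η := by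
  have := (Real.hasDerivAt_sqrt h).comp η (hasDerivAt_Lama η)
  refine this.congr_deriv ?_; ring

lemma hasDerivAt_sqrtLamo (η : ℝ) :
    HasDerivAt (fun x => Real.sqrt (Lamo x)) (Lo' η / (2 * Real.sqrt (Lamo η))) η := by
  have hne : Lamo η ≠ 0 := by have := Lamo_ge η; positivity
  have := (Real.hasDerivAt_sqrt hne).comp η (hasDerivAt_Lamo η)
  refine this.congr_deriv ?_; ring

theorem stmt_16 :
    (∀ ηplus ∈ Set.Ioo (0 : ℝ) Real.pi, ∃ γ > (0 : ℝ),
      ∀ η₁ η₂ : ℝ, 0 ≤ η₁ → η₁ ≤ η₂ → η₂ ≤ ηplus →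
        Real.sqrt (Lama η₂) - Real.sqrt (Lama η₁) ≥ γ * (η₂ - η₁)) ∧
    (∀ a b : ℝ, 0 < a → a ≤ b → b < Real.pi → ∃ γ > (0 : ℝ),
      ∀ η₁ η₂ : ℝ, a ≤ η₁ → η₁ ≤ η₂ → η₂ ≤ b →
        Real.sqrt (Lamo η₁) - Real.sqrt (Lamo η₂) ≥ γ * (η₂ - η₁)) := by
  have hpi := Real.pi_pos
  constructor
  · rintro ηplus ⟨hp0, hpp⟩
    have hcp : 0 < Real.cos (ηplus/2) :=
      Real.cos_pos_of_mem_Ioo ⟨by linarith, by linarith⟩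
    refine ⟨Real.cos (ηplus/2) / 2, by positivity, ?_⟩
    intro η₁ η₂ h0 h12 h2p
    rcases eq_or_lt_of_le h12 with rfl | hlt
    · simp
    · have hcont : ContinuousOn (fun x => Real.sqrt (Lama x)) (Set.Icc η₁ η₂) :=
        (Real.continuous_sqrt.comp continuous_Lama).continuousOn
      have hdiff : DifferentiableOn ℝ (fun x => Real.sqrt (Lama x)) (Set.Ioo η₁ η₂) := by
        intro x hx
        have hx0 : 0 < x := lt_of_le_of_lt h0 hx.1
        have hxp : x < π := by have := hx.2; linarith [lt_of_le_of_lt h2p hpp]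
        exact ((hasDerivAt_sqrtLama x (ne_of_gt (Lama_pos x hx0 hxp))).differentiableAt).differentiableWithinAt
      obtain ⟨c, hc, hderiv⟩ := exists_deriv_eq_slope _ hlt hcont hdiff
      have hc0 : 0 < c := lt_of_le_of_lt h0 hc.1
      have hcle : c ≤ ηplus := le_of_lt (lt_of_lt_of_le hc.2 h2p)
      have hcpi : c < π := lt_of_le_of_lt hcle hpp
      have hLpos := Lama_pos c hc0 hcpi
      have hsqpos : 0 < Real.sqrt (Lama c) := Real.sqrt_pos.2 hLpos
      have hval := (hasDerivAt_sqrtLama c (ne_of_gt hLpos)).deriv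
      have hkey : Real.cos (ηplus/2) / 2 ≤ La' c / (2 * Real.sqrt (Lama c)) := by
        rw [le_div_iff₀ (by positivity)]
        have hCc : Real.cos (ηplus/2) ≤ Real.cos (c/2) :=
          Real.cos_le_cos_of_nonneg_of_le_pi (by linarith) (by linarith) (by linarith)
        have hSc : 0 < Real.sin (c/2) := Real.sin_pos_of_pos_of_lt_pi (by linarith) (by linarith)
        have hsqle := sqrt_Lama_le c hc0.le hcpi.le
        have hLa := La'_ge c hc0.le hcpi.le
        nlinarith [hsqpos.le, mul_le_mul hCc hsqle hsqpos.le
          (Real.cos_nonneg_of_mem_Icc ⟨by linarith, by linarith⟩ : 0 ≤ Real.cos (c/2))]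
      rw [hval] at hderiv
      rw [hderiv] at hkey
      have := (le_div_iff₀ (by linarith : (0:ℝ) < η₂ - η₁)).1 hkey
      linarith
  · intro a b ha hab hbp
    have hsa : 0 < Real.sin (a/2) := Real.sin_pos_of_pos_of_lt_pi (by linarith) (by linarith)
    have hcb : 0 < Real.cos (b/2) := Real.cos_pos_of_mem_Ioo ⟨by linarith, by linarith⟩
    refine ⟨Real.sin (a/2) * Real.cos (b/2) / 2, by positivity, ?_⟩
    intro η₁ η₂ h1 h12 h2
    rcases eq_or_lt_of_le h12 with rfl | hlt
    · simp
    · have hcont : ContinuousOn (fun x => Real.sqrt (Lamo x)) (Set.Icc η₁ η₂) :=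
        (Real.continuous_sqrt.comp continuous_Lamo).continuousOn
      have hdiff : DifferentiableOn ℝ (fun x => Real.sqrt (Lamo x)) (Set.Ioo η₁ η₂) :=
        fun x _ => ((hasDerivAt_sqrtLamo x).differentiableAt).differentiableWithinAt
      obtain ⟨c, hc, hderiv⟩ := exists_deriv_eq_slope _ hlt hcont hdiff
      have hca : a < c := lt_of_le_of_lt h1 hc.1
      have hcb' : c < b := lt_of_lt_of_le hc.2 h2
      have hcpi : c < π := lt_of_lt_of_le hcb' hbp.le
      have hval := (hasDerivAt_sqrtLamo c).deriv
      have hMpos : 0 < Lamo c := lt_of_lt_of_le (by norm_num) (Lamo_ge c)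
      have hsqpos : 0 < Real.sqrt (Lamo c) := Real.sqrt_pos.2 hMpos
      have hsqle : Real.sqrt (Lamo c) ≤ 8 := by
        calc Real.sqrt (Lamo c) ≤ Real.sqrt 64 := Real.sqrt_le_sqrt (Lamo_le c)
        _ = 8 := by rw [show (64:ℝ) = 8^2 by norm_num, Real.sqrt_sq (by norm_num)]
      have hkey : Lo' c / (2 * Real.sqrt (Lamo c)) ≤ -(Real.sin (a/2) * Real.cos (b/2) / 2) := by
        rw [div_le_iff₀ (by positivity)]
        have hS : Real.sin (a/2) ≤ Real.sin (c/2) := by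
          apply Real.strictMonoOn_sin.monotoneOn ⟨by linarith, by linarith⟩
            ⟨by linarith, by linarith⟩ (by linarith)
        have hC : Real.cos (b/2) ≤ Real.cos (c/2) :=
          Real.cos_le_cos_of_nonneg_of_le_pi (by linarith) (by linarith) (by linarith)
        have hLo := Lo'_le c (by linarith) hcpi.le
        have hprod : Real.sin (a/2) * Real.cos (b/2) ≤ Real.sin (c/2) * Real.cos (c/2) :=
          mul_le_mul hS hC hcb.le (by linarith [hsa] : (0:ℝ) ≤ Real.sin (c/2))
        nlinarith [mul_nonneg hsa.le hcb.le]
      rw [hval] at hderiv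
      rw [hderiv] at hkey
      have := (div_le_iff₀ (by linarith : (0:ℝ) < η₂ - η₁)).1 hkey
      linarith
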